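/- Let p be a prime, K a field of characteristic p, D a derivation on K whose p-th iterate is the zero map (D^p = 0), and y ∈ K. Suppose f₀ ∈ K satisfies the p-Riccati equation D^{p-1}(f₀) + f₀^p = y. Then the full solution set of this equation is obtained from f₀ by adding logarithmic derivatives: for f ∈ K, D^{p-1}(f) + f^p = y if and only if there exists g ∈ K, g ≠ 0, with f = f₀ + D(g)/g. -/

import Mathlib

open Polynomial Finset

section Hochschild

variable {S : Type*} [Ring S]

lemma my_choose_cast (p : ℕ) (hp : p.Prime) [CharP S p] :
    ∀ k : ℕ, k ≤ p - 1 → (((p-1).choose k : ℕ) : S) = (-1)^k := by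
  intro k
  induction k with
  | zero => intro _; simp
  | succ k ih =>
    intro hk
    have hk' : k ≤ p - 1 := Nat.le_of_succ_le hk
    have hpos := hp.pos
    have hpascal : (p-1).choose k + (p-1).choose (k+1) = p.choose (k+1) := by
      have h1 : p - 1 + 1 = p := Nat.succ_pred_eq_of_pos hpos
      have h2 := (Nat.choose_succ_succ (p-1) k).symm
      simpa [Nat.succ_eq_add_one, h1] using h2
    have hdvd : p ∣ p.choose (k+1) := hp.dvd_choose_self (by omega) (by omega)
    have h0 : ((p.choose (k+1) : ℕ) : S) = 0 :=
      (CharP.cast_eq_zero_iff S p _).2 hdvd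
    have hsum := congrArg (fun n : ℕ => (n : S)) hpascal
    simp only [Nat.cast_add] at hsum
    rw [h0, ih hk'] at hsum
    have : (((p-1).choose (k+1) : ℕ) : S) = -(-1)^k := (neg_eq_of_add_eq_zero_right hsum).symm
    rw [this, pow_succ, mul_neg_one]

/-- coefficient used in the ad-iterate expansion -/
private def cc (n k : ℕ) : ℤ := (-1)^(n+k) * (n.choose k)

lemma ad_iterate (x a : S) (n : ℕ) :
    (fun y => x * y - y * x)^[n] a
      = ∑ k ∈ range (n+1), cc n k • (x^k * a * x^(n-k)) := by
  induction n with
  | zero => simp [cc]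
  | succ n ih =>
    rw [Function.iterate_succ_apply', ih]
    have hA : x * (∑ k ∈ range (n+1), cc n k • (x^k * a * x^(n-k)))
        = ∑ k ∈ range (n+1), cc n k • (x^(k+1) * a * x^(n-k)) := by
      rw [Finset.mul_sum]
      refine Finset.sum_congr rfl fun k _ => ?_
      rw [mul_smul_comm]
      congr 1
      rw [pow_succ']; simp [mul_assoc]
    have hB : (∑ k ∈ range (n+1), cc n k • (x^k * a * x^(n-k))) * x
        = ∑ k ∈ range (n+1), cc n k • (x^k * a * x^(n-k+1)) := by
      rw [Finset.sum_mul]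
      refine Finset.sum_congr rfl fun k _ => ?_
      rw [smul_mul_assoc]
      congr 1
      rw [pow_succ]; simp [mul_assoc]
    rw [hA, hB]
    rw [Finset.sum_range_succ' (fun k => cc (n+1) k • (x^k * a * x^(n+1-k))) (n+1)]
    have hsplit : ∀ k, cc (n+1) (k+1) = cc n k - cc n (k+1) := by
      intro k
      simp only [cc, Nat.choose_succ_succ]
      push_cast
      ring
    have hstep : ∀ k ∈ range (n+1),
        cc (n+1) (k+1) • (x^(k+1) * a * x^(n+1-(k+1)))
          = cc n k • (x^(k+1) * a * x^(n-k)) - cc n (k+1) • (x^(k+1) * a * x^(n-k)) := by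
      intro k _
      rw [Nat.succ_sub_succ, hsplit, sub_smul]
    rw [Finset.sum_congr rfl hstep, Finset.sum_sub_distrib]
    have hB' : ∑ k ∈ range (n+1), cc n k • (x^k * a * x^(n-k+1))
        = (∑ k ∈ range n, cc n (k+1) • (x^(k+1) * a * x^(n-(k+1)+1)))
          + cc n 0 • (x^0 * a * x^(n-0+1)) :=
      Finset.sum_range_succ' _ n
    have hS2 : ∑ k ∈ range (n+1), cc n (k+1) • (x^(k+1) * a * x^(n-k))
        = ∑ k ∈ range n, cc n (k+1) • (x^(k+1) * a * x^(n-k)) := by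
      rw [Finset.sum_range_succ]
      have : cc n (n+1) = 0 := by
        simp [cc, Nat.choose_eq_zero_of_lt (Nat.lt_succ_self n)]
      rw [this, zero_smul, add_zero]
    have hmatch : ∑ k ∈ range n, cc n (k+1) • (x^(k+1) * a * x^(n-(k+1)+1))
        = ∑ k ∈ range n, cc n (k+1) • (x^(k+1) * a * x^(n-k)) := by
      refine Finset.sum_congr rfl fun k hk => ?_
      have : n - (k+1) + 1 = n - k := by
        have := Finset.mem_range.mp hk; omega
      rw [this]
    have hc0 : cc (n+1) 0 • (x^0 * a * x^(n+1-0)) = -(cc n 0 • (x^0 * a * x^(n-0+1))) := by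
      have h1 : cc (n+1) 0 = -(cc n 0) := by simp [cc, pow_succ]
      have h2 : n + 1 - 0 = n - 0 + 1 := by omega
      rw [h1, h2, neg_smul]
    rw [hB', hS2, hmatch, hc0]
    abel

lemma central_sum (p : ℕ) (hp : p.Prime) [CharP S p] (x a : S) :
    (fun y => x * y - y * x)^[p-1] a = ∑ k ∈ range p, x^k * a * x^(p-1-k) := by
  have hpos := hp.pos
  have hneg : (-1 : S)^(p-1) = 1 := by
    rcases hp.eq_two_or_odd' with h2 | hodd
    · subst h2
      have h : (2 : S) = 0 := by exact_mod_cast CharP.cast_eq_zero S 2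
      have h21 : (2:ℕ) - 1 = 1 := rfl
      rw [h21, pow_one]
      have h' : (1:S) + 1 = 0 := by rw [one_add_one_eq_two]; exact h
      exact neg_eq_of_add_eq_zero_left h'
    · exact Even.neg_one_pow (Nat.Odd.sub_odd hodd odd_one)
  rw [ad_iterate]
  have hr : p - 1 + 1 = p := Nat.succ_pred_eq_of_pos hpos
  rw [hr]
  refine Finset.sum_congr rfl fun k hk => ?_
  have hk' : k ≤ p - 1 := by have := Finset.mem_range.mp hk; omega
  rw [zsmul_eq_mul]
  have h2 : (-1:S)^k * (-1:S)^k = 1 := by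
    rw [← pow_add, ← two_mul, pow_mul, neg_one_sq, one_pow]
  have : ((cc (p-1) k : ℤ) : S) = 1 := by
    simp only [cc]
    push_cast
    rw [my_choose_cast p hp k hk', pow_add, hneg, one_mul, h2]
  rw [this, one_mul]

lemma derivative_pow_noncomm (f : S[X]) (n : ℕ) :
    derivative (f^n) = ∑ k ∈ range n, f^k * derivative f * f^(n-1-k) := by
  induction n with
  | zero => simp
  | succ n ih =>
    rw [pow_succ, derivative_mul, ih, Finset.sum_mul, Finset.sum_range_succ]
    congr 1
    · refine Finset.sum_congr rfl fun k hk => ?_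
      have hk' := Finset.mem_range.mp hk
      have h1 : n + 1 - 1 - k = (n - 1 - k) + 1 := by omega
      rw [h1, pow_succ]; simp [mul_assoc]
    · have : n + 1 - 1 - n = 0 := by omega
      rw [this, pow_zero, mul_one]

lemma hochschild (p : ℕ) (hp : p.Prime) [CharP S p]
    (d a : S) (b : ℕ → S) (hb0 : b 0 = a)
    (hb : ∀ k, d * b k - b k * d = b (k+1))
    (hcomm : ∀ k, a * b k = b k * a) :
    (a + d)^p = a^p + d^p + b (p-1) := by
  haveI : Fact p.Prime := ⟨hp⟩
  have hp2 := hp.two_le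
  set Q : S[X] := C a * X + C d with hQ
  -- natDegree bound
  have hdegQ : Q.natDegree ≤ 1 := by
    refine le_trans (natDegree_add_le _ _) ?_
    simp only [sup_le_iff]
    constructor
    · calc (C a * X).natDegree ≤ (C a).natDegree + X.natDegree := natDegree_mul_le
        _ ≤ 0 + 1 := add_le_add (le_of_eq (natDegree_C a)) natDegree_X_le
        _ = 1 := by norm_num
    · simp
  have hdegQp : (Q^p).natDegree ≤ p := by
    refine le_trans (natDegree_pow_le) ?_
    calc p * Q.natDegree ≤ p * 1 := Nat.mul_le_mul_left p hdegQ
    _ = p := mul_one p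
  -- derivative of Q
  have hderivQ : derivative Q = C a := by
    rw [hQ]
    simp [derivative_mul]
  -- bracket of Q with C (b k)
  have hQb : ∀ k, Q * C (b k) - C (b k) * Q = C (b (k+1)) := by
    intro k
    rw [hQ]
    have h1 : (C a * X) * C (b k) = C (b k) * (C a * X) := by
      calc (C a * X) * C (b k) = C a * (X * C (b k)) := mul_assoc _ _ _
        _ = C a * (C (b k) * X) := by rw [X_mul]
        _ = (C a * C (b k)) * X := (mul_assoc _ _ _).symm
        _ = (C (b k) * C a) * X := by rw [← C_mul, hcomm, C_mul]
        _ = C (b k) * (C a * X) := mul_assoc _ _ _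
    have h2 : C d * C (b k) - C (b k) * C d = C (b (k+1)) := by
      rw [← C_mul, ← C_mul, ← C_sub, hb]
    calc (C a * X + C d) * C (b k) - C (b k) * (C a * X + C d)
        = ((C a * X) * C (b k) - C (b k) * (C a * X)) + (C d * C (b k) - C (b k) * C d) := by
          noncomm_ring
      _ = C (b (k+1)) := by rw [h1, h2]; noncomm_ring
  have hiter : ∀ k, (fun y => Q * y - y * Q)^[k] (C a) = C (b k) := by
    intro k
    induction k with
    | zero => simp [hb0]
    | succ k ih => rw [Function.iterate_succ_apply', ih, hQb]
  -- derivative of Q^p equals C (b (p-1))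
  have hderiv : derivative (Q^p) = C (b (p-1)) := by
    rw [derivative_pow_noncomm, hderivQ]
    have := central_sum p hp Q (C a)
    rw [hiter (p-1)] at this
    rw [← this]
  -- coefficients
  have hu0 : (Q^p).coeff 0 = d^p := by
    have hq0 : Q.coeff 0 = d := by
      rw [hQ]
      simp [coeff_add, coeff_C_mul, coeff_X_zero]
    have : ∀ n : ℕ, (Q^n).coeff 0 = d^n := by
      intro n
      induction n with
      | zero => simp
      | succ n ih => rw [pow_succ, mul_coeff_zero, ih, hq0, pow_succ]
    exact this p
  have hu1 : (Q^p).coeff 1 = b (p-1) := by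
    have h := congrArg (fun q : S[X] => q.coeff 0) hderiv
    simp only [coeff_derivative, coeff_C] at h
    simpa using h
  have humid : ∀ k, 2 ≤ k → k ≤ p - 1 → (Q^p).coeff k = 0 := by
    intro k hk2 hkp
    have h := congrArg (fun q : S[X] => q.coeff (k-1)) hderiv
    simp only [coeff_derivative, coeff_C] at h
    have hk1 : k - 1 + 1 = k := by omega
    rw [hk1] at h
    have hkne : k - 1 ≠ 0 := by omega
    rw [if_neg hkne] at h
    -- h : (Q^p).coeff k * (k : S) = 0  (with cast of (k-1)+1)
    have h' : (Q^p).coeff k * ((k : ℕ) : S) = 0 := by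
      have : (((k - 1 : ℕ) : S) + 1) = ((k : ℕ) : S) := by
        rw [← Nat.cast_succ]
        exact congrArg Nat.cast hk1
      rw [← this]
      exact_mod_cast h
    -- k is invertible mod p
    have hndvd : ¬ p ∣ k := by
      intro hd
      have := Nat.le_of_dvd (by omega) hd
      omega
    have hk0 : (k : ZMod p) ≠ 0 := by
      rwa [Ne, ZMod.natCast_eq_zero_iff]
    haveI : Fact p.Prime := ⟨hp⟩
    set j := ((k : ZMod p)⁻¹).val with hj
    have hkj : ((k * j : ℕ) : ZMod p) = ((1 : ℕ) : ZMod p) := by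
      push_cast
      rw [hj, ZMod.natCast_val, ZMod.cast_id, mul_inv_cancel₀ hk0]
    have hmod : (k * j) % p = 1 % p := (ZMod.natCast_eq_natCast_iff _ _ _).mp hkj
    have hone : ((k * j : ℕ) : S) = 1 := by
      have hdecomp : k * j = p * ((k*j)/p) + (k*j) % p := (Nat.div_add_mod _ _).symm
      rw [hdecomp]
      push_cast
      rw [CharP.cast_eq_zero S p]
      rw [hmod]
      have : (1 : ℕ) % p = 1 := Nat.mod_eq_of_lt (by omega)
      rw [this]
      simp
    calc (Q^p).coeff k = (Q^p).coeff k * ((k*j : ℕ) : S) := by rw [hone, mul_one]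
      _ = ((Q^p).coeff k * (k : S)) * (j : S) := by rw [Nat.cast_mul, ← mul_assoc]
      _ = 0 := by rw [h', zero_mul]
  have hup : (Q^p).coeff p = a^p := by
    have hq1 : Q.coeff 1 = a := by
      rw [hQ]
      simp [coeff_add, coeff_C_mul, coeff_X_one, coeff_C]
    have : ∀ n : ℕ, (Q^n).coeff n = a^n := by
      intro n
      induction n with
      | zero => simp
      | succ n ih =>
        rw [pow_succ, coeff_mul]
        rw [Finset.sum_eq_single (n, 1)]
        · rw [ih, hq1]; rw [pow_succ]
        · rintro ⟨i, j⟩ hmem hne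
          rw [Finset.HasAntidiagonal.mem_antidiagonal] at hmem
          rcases Nat.lt_or_ge j 2 with hj | hj
          · interval_cases j
            · -- j = 0, i = n+1 > natDegree Q^n
              have : (Q^n).coeff i = 0 := by
                refine coeff_eq_zero_of_natDegree_lt ?_
                have : (Q^n).natDegree ≤ n := by
                  refine le_trans (natDegree_pow_le) ?_
                  calc n * Q.natDegree ≤ n * 1 := Nat.mul_le_mul_left n hdegQ
                  _ = n := mul_one n
                omega
              rw [this, zero_mul]
            · -- j = 1 forces i = n, contradiction with hne
              exfalso; apply hne; simp at hmem ⊢; omega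
          · have : Q.coeff j = 0 := by
              refine coeff_eq_zero_of_natDegree_lt ?_
              omega
            rw [this, mul_zero]
        · intro hmem
          exfalso
          apply hmem
          rw [Finset.HasAntidiagonal.mem_antidiagonal]
    exact this p
  -- evaluate at 1
  have hcomm1 : ∀ s : S, Commute ((RingHom.id S) s) (1 : S) := fun s => Commute.one_right _
  let φ : S[X] →+* S := eval₂RingHom' (RingHom.id S) 1 hcomm1
  have hφQ : φ Q = a + d := by
    show eval₂ (RingHom.id S) 1 Q = a + d
    rw [hQ]
    simp [eval₂_add, eval₂_mul_X]
  have hφ : φ (Q^p) = (a + d)^p := by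
    rw [map_pow, hφQ]
  have hsum : φ (Q^p) = ∑ i ∈ range (p+1), (Q^p).coeff i := by
    show eval₂ (RingHom.id S) 1 (Q^p) = _
    rw [eval₂_eq_sum_range' (RingHom.id S) (lt_of_le_of_lt hdegQp (Nat.lt_succ_self p)) 1]
    simp
  have htriple : ∑ i ∈ range (p+1), (Q^p).coeff i = d^p + b (p-1) + a^p := by
    have hsub : ({0, 1, p} : Finset ℕ) ⊆ range (p+1) := by
      intro i hi
      simp only [Finset.mem_insert, Finset.mem_singleton] at hi
      rcases hi with rfl | rfl | rfl <;> simp [Finset.mem_range] <;> omega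
    rw [← Finset.sum_subset hsub]
    · have h01 : (0:ℕ) ∉ ({1, p} : Finset ℕ) := by simp; omega
      have h1p : (1:ℕ) ∉ ({p} : Finset ℕ) := by simp; omega
      rw [Finset.sum_insert h01, Finset.sum_insert h1p, Finset.sum_singleton]
      rw [hu0, hu1, hup, add_assoc]
    · intro i hi hni
      simp only [Finset.mem_insert, Finset.mem_singleton, not_or] at hni
      refine humid i ?_ ?_
      · omega
      · have := Finset.mem_range.mp hi; omega
  rw [← hφ, hsum, htriple]
  abel

end Hochschild

section Main

/-- Let `p` be a prime, `K` a field of characteristic `p`, `D` a derivation on `K`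
(an additive map satisfying the Leibniz rule) with `D^p = 0`, and `y ∈ K`. If
`f₀ ∈ K` is a solution of the `p`-Riccati equation `D^{p-1}(f₀) + f₀^p = y`, then the
full solution set is obtained from `f₀` by adding logarithmic derivatives: for `f ∈ K`,
`D^{p-1}(f) + f^p = y` if and only if `f = f₀ + D(g)/g` for some nonzero `g ∈ K`. -/
theorem pRiccati_solutions_from_particular
    (p : ℕ) (hp : p.Prime) (K : Type*) [Field K] [CharP K p]
    (D : K → K)
    (hadd : ∀ u v : K, D (u + v) = D u + D v)
    (hleib : ∀ u v : K, D (u * v) = u * D v + v * D u)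
    (hDp : ∀ a : K, D^[p] a = 0)
    (y f₀ : K) (hf₀ : D^[p - 1] f₀ + f₀ ^ p = y)
    (f : K) :
    D^[p - 1] f + f ^ p = y ↔ ∃ g : K, g ≠ 0 ∧ f = f₀ + D g / g := by
  haveI : Fact p.Prime := ⟨hp⟩
  have hp2 := hp.two_le
  -- basic facts about D
  have hD1 : D 1 = 0 := by
    have h := hleib 1 1
    simp only [one_mul, mul_one] at h
    exact (left_eq_add.mp h)
  -- iterates of D are additive
  have hDkadd : ∀ (k : ℕ) (u v : K), D^[k] (u + v) = D^[k] u + D^[k] v := by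
    intro k
    induction k with
    | zero => intro u v; simp
    | succ k ih =>
      intro u v
      rw [Function.iterate_succ_apply', Function.iterate_succ_apply',
        Function.iterate_succ_apply', ih, hadd]
  have hD0 : D 0 = 0 := by
    have h := hadd 0 0
    simp only [add_zero] at h
    exact (left_eq_add.mp h)
  have hDk0 : ∀ k : ℕ, D^[k] (0:K) = 0 := by
    intro k
    induction k with
    | zero => simp
    | succ k ih => rw [Function.iterate_succ_apply', ih, hD0]
  have hDkneg : ∀ (k : ℕ) (u : K), D^[k] (-u) = -D^[k] u := by
    intro k u
    have h := hDkadd k u (-u)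
    rw [add_neg_cancel, hDk0] at h
    exact (neg_eq_of_add_eq_zero_right h.symm).symm
  -- the endomorphism ring
  haveI : CharP (AddMonoid.End K) p := by
    constructor
    intro n
    rw [← CharP.cast_eq_zero_iff K p n]
    constructor
    · intro h
      have h1 := DFunLike.congr_fun h (1:K)
      have h2 : n • (1:K) = 0 := h1
      rwa [nsmul_eq_mul, mul_one] at h2
    · intro h
      refine AddMonoidHom.ext fun u => ?_
      show n • u = (0:K)
      rw [nsmul_eq_mul, h, zero_mul]
  set Dh : AddMonoid.End K := AddMonoidHom.mk' D hadd with hDh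
  have hDh_apply : ∀ u : K, Dh u = D u := fun u => rfl
  set L : K → AddMonoid.End K := fun a => AddMonoidHom.mk' (fun u => a * u) (fun u v => mul_add a u v)
    with hLdef
  have hL_apply : ∀ a u : K, L a u = a * u := fun a u => rfl
  have hLmul : ∀ a c : K, L (a * c) = L a * L c := by
    intro a c
    refine AddMonoidHom.ext fun u => ?_
    show (a * c) * u = a * (c * u)
    rw [mul_assoc]
  have hLadd : ∀ a c : K, L (a + c) = L a + L c := by
    intro a c
    refine AddMonoidHom.ext fun u => ?_
    show (a + c) * u = a * u + c * u
    rw [add_mul]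
  have hL1 : L 1 = 1 := by
    refine AddMonoidHom.ext fun u => ?_
    show (1:K) * u = u
    rw [one_mul]
  have hLpow : ∀ (a : K) (n : ℕ), (L a)^n = L (a^n) := by
    intro a n
    induction n with
    | zero => simp [hL1]
    | succ n ih => rw [pow_succ, pow_succ, ih, hLmul]
  have hLinj : ∀ a : K, L a = 0 → a = 0 := by
    intro a h
    have := congrArg (fun φ : AddMonoid.End K => φ (1:K)) h
    simp only [AddMonoid.End.zero_apply] at this
    rw [hL_apply, mul_one] at this
    exact this
  have hbracket : ∀ a : K, Dh * L a - L a * Dh = L (D a) := by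
    intro a
    refine AddMonoidHom.ext fun u => ?_
    show D (a * u) - a * D u = D a * u
    rw [hleib]
    ring
  have hpow_apply : ∀ (T : AddMonoid.End K) (n : ℕ) (u : K), (T^n) u = (⇑T)^[n] u := by
    intro T n u
    rw [← AddMonoid.End.coe_pow]
  have hDhpow : Dh^p = 0 := by
    refine AddMonoidHom.ext fun u => ?_
    refine (hpow_apply Dh p u).trans ?_
    exact hDp u
  -- Key lemma: for c : K, (L c + Dh)^p = L (c^p + D^[p-1] c)
  have hkey : ∀ c : K, (L c + Dh)^p = L (c^p + D^[p-1] c) := by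
    intro c
    have hhoch := hochschild (S := AddMonoid.End K) p hp Dh (L c) (fun k => L (D^[k] c)) (by simp)
      (by
        intro k
        rw [hbracket]
        congr 1
        exact (Function.iterate_succ_apply' D k c).symm
      )
      (by
        intro k
        rw [← hLmul, ← hLmul, mul_comm]
      )
    rw [hhoch, hDhpow, hLpow, hLadd]
    abel
  -- reduce to the homogeneous equation for c = f - f₀
  have hred : (D^[p - 1] f + f ^ p = y) ↔ (D^[p-1] (f - f₀) + (f - f₀)^p = 0) := by
    have hsub : D^[p-1] (f - f₀) = D^[p-1] f - D^[p-1] f₀ := by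
      have := hDkadd (p-1) f (-f₀)
      rw [hDkneg] at this
      rw [sub_eq_add_neg, this, sub_eq_add_neg]
    have hfrob : (f - f₀)^p = f^p - f₀^p := sub_pow_char f f₀
    rw [hsub, hfrob]
    constructor
    · intro h
      linear_combination h - hf₀
    · intro h
      linear_combination h + hf₀
  rw [hred]
  constructor
  · -- forward: find g
    intro hc
    set c := f - f₀ with hcdef
    have hcp : c^p + D^[p-1] c = 0 := by linear_combination hc
    set T : AddMonoid.End K := L c + Dh with hT
    have hTp : T^p = 0 := by
      rw [hT, hkey c]
      have : c^p + D^[p-1] c = 0 := hcp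
      rw [this]
      refine AddMonoidHom.ext fun u => ?_
      show (0:K) * u = 0
      rw [zero_mul]
    -- find nonzero h in kernel of T
    classical
    have hex : ∃ n, (⇑T)^[n] (1:K) = 0 := by
      refine ⟨p, ?_⟩
      rw [← hpow_apply, hTp]
      rfl
    set k := Nat.find hex with hk
    have hk0 : (⇑T)^[k] (1:K) = 0 := Nat.find_spec hex
    have hkne : k ≠ 0 := by
      intro h
      have := hk0
      rw [h] at this
      simp at this
    have hprev : (⇑T)^[k-1] (1:K) ≠ 0 := by
      have := Nat.find_min hex (m := k - 1) (by omega)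
      exact this
    set h := (⇑T)^[k-1] (1:K) with hh
    have hTh : T h = 0 := by
      have hk1 : (k-1) + 1 = k := by omega
      calc T h = (⇑T)^[(k-1)+1] (1:K) := (Function.iterate_succ_apply' (⇑T) (k-1) 1).symm
        _ = (⇑T)^[k] (1:K) := by rw [hk1]
        _ = 0 := hk0
    have hTh' : c * h + D h = 0 := by
      have : T h = c * h + D h := rfl
      rw [← this, hTh]
    refine ⟨h⁻¹, inv_ne_zero hprev, ?_⟩
    have hDh_inv : D (h⁻¹) = c * h⁻¹ := by
      have h1 : D (h * h⁻¹) = 0 := by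
        rw [mul_inv_cancel₀ hprev, hD1]
      rw [hleib] at h1
      -- h * D h⁻¹ + h⁻¹ * D h = 0
      have hDhval : D h = -(c * h) := by linear_combination hTh'
      rw [hDhval] at h1
      have hinv : h⁻¹ * h = 1 := inv_mul_cancel₀ hprev
      have h2 : h * D (h⁻¹) = c := by linear_combination h1 + c * hinv
      linear_combination h⁻¹ * h2 - D h⁻¹ * hinv
    rw [hDh_inv]
    rw [mul_div_assoc, div_self (inv_ne_zero hprev), mul_one]
    rw [hcdef]
    ring
  · -- backward
    rintro ⟨g, hg, hfg⟩
    set c := D g / g with hcdef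
    have hfc : f - f₀ = c := by rw [hfg]; ring
    rw [hfc]
    set T : AddMonoid.End K := L c + Dh with hT
    have hconj : T = L g⁻¹ * Dh * L g := by
      refine AddMonoidHom.ext fun u => ?_
      show c * u + D u = g⁻¹ * D (g * u)
      rw [hleib]
      field_simp [hcdef]
      rw [hcdef, div_mul_eq_mul_div, add_mul, div_mul_cancel₀ _ hg]; ring
    have hTp : T^p = 0 := by
      have hLg : L g * L g⁻¹ = 1 := by
        rw [← hLmul, mul_inv_cancel₀ hg, hL1]
      have hconjpow : ∀ n : ℕ, (L g⁻¹ * Dh * L g)^n = L g⁻¹ * Dh^n * L g := by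
        intro n
        induction n with
        | zero =>
          simp only [pow_zero]
          rw [mul_one, ← hLmul, inv_mul_cancel₀ hg, hL1]
        | succ n ih =>
          rw [pow_succ, ih, pow_succ]
          calc L g⁻¹ * Dh^n * L g * (L g⁻¹ * Dh * L g)
              = L g⁻¹ * Dh^n * (L g * L g⁻¹) * Dh * L g := by
                noncomm_ring
            _ = L g⁻¹ * (Dh^n * Dh) * L g := by rw [hLg]; noncomm_ring
      rw [hconj, hconjpow, hDhpow]
      noncomm_ring
    have h0 : L (c^p + D^[p-1] c) = 0 := by
      rw [← hkey c, ← hT, hTp]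
    have := hLinj _ h0
    linear_combination this
end Main
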